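/- Let S3 = ⟨r, s | r³ = s² = 1, s*r = r²*s⟩ act on Z/3 by r·k = k+1, s·k = −k. Define the algebra Tube_A with basis {T(g, h, j) : g, h ∈ S3, j ∈ Z/3} and product T(g,h,j)·T(g',h',k) = δ_{h', g⁻¹hg} · δ_{j, g'·k} · T(g*g', h, k). Then the elements P₁ = ½ ∑_{k ∈ Z/3} ∑_{g ∈ Stab(k)} T(g, 1, k) and P_e = ½ ∑_{k ∈ Z/3} ∑_{g ∈ Stab(k)} σ(g) T(g, 1, k), where σ : S3 → {±1} is the sign character and Stab(k) = {1, r^(2k)*s}, satisfy P₁² = P₁, P_e² = P_e, and P₁·P_e = P_e·P₁ = 0. -/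

import Mathlib

/-- `S₃`, realized as the dihedral group of order 6. -/
abbrev G := DihedralGroup 3

def ss : G := DihedralGroup.sr 0

/-- The action of `S₃` on `ℤ/3` with `r·k = k+1`, `s·k = -k`. -/
def act : G → ZMod 3 → ZMod 3
  | DihedralGroup.r i, k => k + i
  | DihedralGroup.sr i, k => -k - i

/-- The underlying vector space of the `A`-tube algebra `Tube_A(Hilb(S₃))`:
functions on triples `(g, h, j)`, with `T(g,h,j)` the indicator of `(g,h,j)`. -/
abbrev TubeA := G × G × ZMod 3 → ℂ

/-- Basis vector `T(g,h,j)`. -/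
def T (g h : G) (j : ZMod 3) : TubeA := fun p => if p = (g, h, j) then 1 else 0

/-- The `A`-tube algebra multiplication, determined on basis vectors by
`T(g,h,j)·T(g',h',k) = δ_{h', g⁻¹hg} · δ_{j, g'·k} · T(g*g', h, k)`. -/
noncomputable def tmul (x y : TubeA) : TubeA :=
  fun p => ∑ g : G,
    x (g, p.2.1, act (g⁻¹ * p.1) p.2.2) * y (g⁻¹ * p.1, g⁻¹ * p.2.1 * g, p.2.2)

/-- The stabilizer `Stab(k) = {1, r^(2k)*s}` as a finset. -/
def stabF (k : ZMod 3) : Finset G := {1, DihedralGroup.r (2 * k) * ss}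

/-- The sign character `σ` of `S₃`: `σ(rⁱ) = 1`, `σ(rⁱs) = -1`. -/
def sgn : G → ℂ
  | DihedralGroup.r _ => 1
  | DihedralGroup.sr _ => -1

/-- `P₁ = ½ ∑_k ∑_{g ∈ Stab(k)} T(g,1,k)`. -/
noncomputable def P1 : TubeA :=
  (2 : ℂ)⁻¹ • ∑ k : ZMod 3, ∑ g ∈ stabF k, T g 1 k

/-- `P_e = ½ ∑_k ∑_{g ∈ Stab(k)} σ(g) T(g,1,k)`. -/
noncomputable def Pe : TubeA :=
  (2 : ℂ)⁻¹ • ∑ k : ZMod 3, ∑ g ∈ stabF k, sgn g • T g 1 k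

lemma caseZ (j : ZMod 3) : j = 0 ∨ j = 1 ∨ j = 2 := by revert j; decide
lemma caseG (g : G) : g = .r 0 ∨ g = .r 1 ∨ g = .r 2 ∨ g = .sr 0 ∨ g = .sr 1 ∨ g = .sr 2 := by
  rcases g with i | i <;> revert i <;> decide

lemma univG : (Finset.univ : Finset G) = {.r 0, .r 1, .r 2, .sr 0, .sr 1, .sr 2} := by decide

lemma sumG (f : G → ℂ) : ∑ g : G, f g =
    f (.r 0) + f (.r 1) + f (.r 2) + f (.sr 0) + f (.sr 1) + f (.sr 2) := by
  rw [univG]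
  rw [show ({.r 0, .r 1, .r 2, .sr 0, .sr 1, .sr 2} : Finset G)
      = insert (.r 0) (insert (.r 1) (insert (.r 2) (insert (.sr 0) (insert (.sr 1) {.sr 2})))) from rfl]
  rw [Finset.sum_insert (by decide), Finset.sum_insert (by decide), Finset.sum_insert (by decide),
    Finset.sum_insert (by decide), Finset.sum_insert (by decide), Finset.sum_singleton]
  ring

lemma stab_eq (k : ZMod 3) : stabF k = {1, .sr k} := by
  have : DihedralGroup.r (2 * k) * ss = DihedralGroup.sr k := by
    rw [ss, DihedralGroup.r_mul_sr]
    congr 1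
    revert k; decide
  rw [stabF, this]

lemma P1_apply (g h : G) (j : ZMod 3) :
    P1 (g, h, j) = (2:ℂ)⁻¹ * ((if g = 1 ∧ h = 1 then 1 else 0)
      + (if g = .sr j ∧ h = 1 then 1 else 0)) := by
  have key : ∀ x : ZMod 3 → G, ∑ k : ZMod 3, T (x k) 1 k (g, h, j)
      = if g = x j ∧ h = 1 then (1:ℂ) else 0 := by
    intro x
    rw [Finset.sum_eq_single j]
    · simp [T, Prod.ext_iff, and_assoc]
    · intro k _ hk; simp [T, Prod.ext_iff]; tauto
    · simp
  simp only [P1, Pi.smul_apply, Finset.sum_apply, stab_eq, smul_eq_mul]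
  rw [Finset.sum_congr rfl (fun k _ => Finset.sum_pair (by simp [DihedralGroup.one_def, -DihedralGroup.r_zero]))]
  rw [Finset.sum_add_distrib, key (fun _ => 1), key (fun k => .sr k)]

lemma Pe_apply (g h : G) (j : ZMod 3) :
    Pe (g, h, j) = (2:ℂ)⁻¹ * ((if g = 1 ∧ h = 1 then 1 else 0)
      - (if g = .sr j ∧ h = 1 then 1 else 0)) := by
  have key : ∀ (x : ZMod 3 → G), ∑ k : ZMod 3, sgn (x k) * T (x k) 1 k (g, h, j)
      = sgn (x j) * (if g = x j ∧ h = 1 then (1:ℂ) else 0) := by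
    intro x
    rw [Finset.sum_eq_single j]
    · simp [T, Prod.ext_iff, and_assoc]
    · intro k _ hk; simp [T, Prod.ext_iff]; tauto
    · simp
  simp only [Pe, Pi.smul_apply, Finset.sum_apply, stab_eq, smul_eq_mul]
  rw [Finset.sum_congr rfl (fun k _ => Finset.sum_pair (by simp [DihedralGroup.one_def, -DihedralGroup.r_zero]))]
  rw [Finset.sum_add_distrib, key (fun _ => 1), key (fun k => .sr k)]
  simp only [sgn, DihedralGroup.one_def]
  split_ifs <;> ring

@[simp] lemma inv_r (i : ZMod 3) : (DihedralGroup.r i : G)⁻¹ = .r (-i) := rfl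
@[simp] lemma inv_sr (i : ZMod 3) : (DihedralGroup.sr i : G)⁻¹ = .sr i := rfl

lemma P1_zero (g : G) (h : G) (j : ZMod 3) (hh : h ≠ 1) : P1 (g, h, j) = 0 := by
  rw [P1_apply]; simp [hh]

lemma Pe_zero (g : G) (h : G) (j : ZMod 3) (hh : h ≠ 1) : Pe (g, h, j) = 0 := by
  rw [Pe_apply]; simp [hh]

lemma tmul_zero_of (x y : TubeA) (hx : ∀ g h j, h ≠ 1 → x (g, h, j) = 0)
    (g0 h : G) (j : ZMod 3) (hh : h ≠ 1) : tmul x y (g0, h, j) = 0 := by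
  show (∑ g : G, _) = 0
  exact Finset.sum_eq_zero fun g _ => by rw [hx g h _ hh, zero_mul]
set_option maxHeartbeats 1000000 in
private lemma tubeC1 : tmul P1 P1 = P1 := by
  funext p
  obtain ⟨g0, h, j⟩ := p
  by_cases hh : h = 1
  · subst hh
    rcases caseG g0 with h1|h1|h1|h1|h1|h1 <;> subst h1 <;>
      rcases caseZ j with h2|h2|h2 <;> subst h2 <;>
    · show (∑ g : G, _) = _
      rw [sumG]
      simp +decide [P1_apply, act, DihedralGroup.one_def, -DihedralGroup.r_zero]
      try norm_num
  · rw [tmul_zero_of _ _ (fun a b c => P1_zero a b c) _ _ _ hh, P1_zero _ _ _ hh]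

set_option maxHeartbeats 1000000 in
private lemma tubeC2 : tmul Pe Pe = Pe := by
  funext p
  obtain ⟨g0, h, j⟩ := p
  by_cases hh : h = 1
  · subst hh
    rcases caseG g0 with h1|h1|h1|h1|h1|h1 <;> subst h1 <;>
      rcases caseZ j with h2|h2|h2 <;> subst h2 <;>
    · show (∑ g : G, _) = _
      rw [sumG]
      simp +decide [Pe_apply, act, DihedralGroup.one_def, -DihedralGroup.r_zero]
      try norm_num
  · rw [tmul_zero_of _ _ (fun a b c => Pe_zero a b c) _ _ _ hh, Pe_zero _ _ _ hh]

set_option maxHeartbeats 1000000 in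
private lemma tubeC3 : tmul P1 Pe = 0 := by
  funext p
  obtain ⟨g0, h, j⟩ := p
  by_cases hh : h = 1
  · subst hh
    rcases caseG g0 with h1|h1|h1|h1|h1|h1 <;> subst h1 <;>
      rcases caseZ j with h2|h2|h2 <;> subst h2 <;>
    · show (∑ g : G, _) = (0 : ℂ)
      rw [sumG]
      simp +decide [P1_apply, Pe_apply, act, DihedralGroup.one_def, -DihedralGroup.r_zero]
      try norm_num
  · show tmul P1 Pe (g0, h, j) = (0 : ℂ)
    exact tmul_zero_of _ _ (fun a b c => P1_zero a b c) _ _ _ hh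

set_option maxHeartbeats 1000000 in
private lemma tubeC4 : tmul Pe P1 = 0 := by
  funext p
  obtain ⟨g0, h, j⟩ := p
  by_cases hh : h = 1
  · subst hh
    rcases caseG g0 with h1|h1|h1|h1|h1|h1 <;> subst h1 <;>
      rcases caseZ j with h2|h2|h2 <;> subst h2 <;>
    · show (∑ g : G, _) = (0 : ℂ)
      rw [sumG]
      simp +decide [P1_apply, Pe_apply, act, DihedralGroup.one_def, -DihedralGroup.r_zero]
      try norm_num
  · show tmul Pe P1 (g0, h, j) = (0 : ℂ)
    exact tmul_zero_of _ _ (fun a b c => Pe_zero a b c) _ _ _ hh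

/-- The toric code idempotents `P₁` and `P_e` in the `A`-tube algebra of
`Hilb(S₃)` are orthogonal idempotents. -/
theorem tubeA_toric_idempotents :
    tmul P1 P1 = P1 ∧ tmul Pe Pe = Pe ∧ tmul P1 Pe = 0 ∧ tmul Pe P1 = 0 :=
  ⟨tubeC1, tubeC2, tubeC3, tubeC4⟩
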